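/- The bid profile b_i(δ) = max(v_i, max_{j∈D_i} v_j − δ) with full (truthful) referrals is an ε-approximate Nash equilibrium of TRDM: for every ε > 0 there exists δ0 > 0 such that for every δ ∈ (0, δ0) and every agent i, no unilateral deviation — any bid v'_i ≥ 0 together with deleting any subset of i's out-edges (which removes the corresponding subtrees and their agents from the auction), TRDM then being run on the resulting tree with the other remaining agents bidding b_j(δ) — gives agent i utility more than ε above its utility at the profile (b_j(δ))_{j∈V} on the full tree G. -/

import Mathlib

open Classical

/-- A finite directed tree rooted at the seller `s`: every vertex reaches `s`
by iterating the parent map, and the root is its own parent. The agents are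
the non-root vertices. -/
structure DiffusionTree (α : Type*) where
  s : α
  parent : α → α
  parent_s : parent s = s
  reaches_s : ∀ x : α, ∃ n : ℕ, parent^[n] x = s

namespace DiffusionTree

variable {α : Type*} [Fintype α]

/-- The set of agents: all vertices except the seller. -/
noncomputable def agents (T : DiffusionTree α) : Finset α :=
  Finset.univ.filter (fun x => x ≠ T.s)

/-- `T.desc i j` : `j` is a strict descendant of `i`. -/
def desc (T : DiffusionTree α) (i j : α) : Prop :=
  ∃ n : ℕ, 0 < n ∧ T.parent^[n] j = i

/-- `V_{-i}` relative to the active agent set `A`: remove `i` and its descendants. -/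
noncomputable def Vminus (T : DiffusionTree α) (A : Finset α) (i : α) : Finset α :=
  A.filter (fun j => j ≠ i ∧ ¬ T.desc i j)

/-- `b*_S`: the highest bid in `S`, with `b*_∅ = 0`. -/
noncomputable def bstar (b : α → ℝ) (S : Finset α) : ℝ :=
  WithBot.unbotD 0 ((S.image b).max)

/-- Distance from a vertex to the root. -/
noncomputable def depth (T : DiffusionTree α) (x : α) : ℕ :=
  Nat.find (T.reaches_s x)

/-- The vertex `a_j` on the path `s = a_0, a_1, …, a_k = w` from `s` to `w`. -/
noncomputable def pathVx (T : DiffusionTree α) (w : α) (j : ℕ) : α :=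
  T.parent^[T.depth w - j] w

/-- TRDM payments, on the active agent set `A`, for bids `b` and winner `w`:
the winner pays `b*_{V_{-w}}`; an intermediate path agent `a_j` pays
`b*_{V_{-a_j}} − b*_{V_{-a_{j+1}}}`; everyone else pays `0`. -/
noncomputable def payment (T : DiffusionTree α) (A : Finset α) (b : α → ℝ)
    (w : α) (x : α) : ℝ :=
  if x = w then bstar b (T.Vminus A w)
  else if ∃ j : ℕ, 1 ≤ j ∧ j < T.depth w ∧ T.pathVx w j = x then
    bstar b (T.Vminus A x) - bstar b (T.Vminus A (T.pathVx w (T.depth x + 1)))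
  else 0

/-- TRDM utility of an agent `i` with true valuation `v`. -/
noncomputable def util (T : DiffusionTree α) (A : Finset α) (b : α → ℝ)
    (w : α) (v : ℝ) (i : α) : ℝ :=
  (if i = w then v else 0) - T.payment A b w i

end DiffusionTree

namespace DiffusionTree

variable {α : Type*} [Fintype α]

/-- The equilibrium bid profile `b_i(δ) = max(v_i, max_{j ∈ D_i} v_j − δ)`
(for leaves, `b_i(δ) = v_i`). -/
noncomputable def eqBid (T : DiffusionTree α) (v : α → ℝ) (δ : ℝ) (i : α) : ℝ :=
  max (v i) (bstar v (T.agents.filter (fun j => T.desc i j)) - δ)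

/-- The agents remaining after deleting, for each child `c ∈ E'`, the subtree
rooted at `c`. -/
noncomputable def removeSubtrees (T : DiffusionTree α) (E' : Finset α) : Finset α :=
  T.agents.filter (fun j => ∀ c ∈ E', j ≠ c ∧ ¬ T.desc c j)

end DiffusionTree

section AuxLemmas

namespace DiffusionTree

variable {α : Type*} [Fintype α] (T : DiffusionTree α)

lemma iterate_s' (n : ℕ) : T.parent^[n] T.s = T.s :=
  Function.iterate_fixed T.parent_s n

lemma iterate_eq_s' {x : α} {a b : ℕ} (h : T.parent^[a] x = T.s) (hab : a ≤ b) :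
    T.parent^[b] x = T.s := by
  obtain ⟨c, rfl⟩ := Nat.exists_eq_add_of_le hab
  rw [Nat.add_comm, Function.iterate_add_apply, h, iterate_s']

lemma eq_s_of_iterate_fixed' {x : α} {n : ℕ} (hn : 0 < n) (h : T.parent^[n] x = x) :
    x = T.s := by
  obtain ⟨N, hN⟩ := T.reaches_s x
  have key : ∀ m : ℕ, T.parent^[n * m] x = x := by
    intro m
    induction m with
    | zero => simp
    | succ m ih => rw [Nat.mul_succ, Function.iterate_add_apply, h, ih]
  have h1 : T.parent^[n * N] x = T.s :=
    T.iterate_eq_s' hN (Nat.le_mul_of_pos_left N hn)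
  rw [key N] at h1
  exact h1

lemma desc_trans' {i j k : α} (h1 : T.desc i j) (h2 : T.desc j k) : T.desc i k := by
  obtain ⟨n, hn, hnj⟩ := h1
  obtain ⟨m, hm, hmk⟩ := h2
  exact ⟨n + m, by omega, by rw [Function.iterate_add_apply, hmk, hnj]⟩

lemma not_desc_self' {i : α} (hi : i ≠ T.s) : ¬ T.desc i i := by
  rintro ⟨n, hn, h⟩
  exact hi (T.eq_s_of_iterate_fixed' hn h)

lemma desc_parent' {c i : α} (h : T.parent c = i) : T.desc i c :=
  ⟨1, one_pos, by simpa using h⟩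

lemma parent_facts' {i c : α} (hi : i ≠ T.s) (h : T.parent c = i) :
    i ≠ c ∧ ¬ T.desc c i := by
  constructor
  · rintro rfl
    exact hi (T.eq_s_of_iterate_fixed' one_pos (by simpa using h))
  · rintro ⟨n, hn, hcn⟩
    apply hi
    apply T.eq_s_of_iterate_fixed' (Nat.succ_pos n)
    rw [Function.iterate_succ_apply', hcn, h]

lemma iterate_depth' (x : α) : T.parent^[T.depth x] x = T.s :=
  Nat.find_spec (T.reaches_s x)

lemma depth_le' {x : α} {k : ℕ} (h : T.parent^[k] x = T.s) : T.depth x ≤ k :=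
  Nat.find_min' (T.reaches_s x) h

lemma depth_min' {x : α} {k : ℕ} (h : k < T.depth x) : T.parent^[k] x ≠ T.s :=
  Nat.find_min (T.reaches_s x) h

lemma depth_pos' {x : α} (hx : x ≠ T.s) : 0 < T.depth x := by
  rcases Nat.eq_zero_or_pos (T.depth x) with h | h
  · exfalso
    have := T.iterate_depth' x
    rw [h] at this
    exact hx this
  · exact h

lemma depth_iterate' {x : α} {k : ℕ} (h : k ≤ T.depth x) :
    T.depth (T.parent^[k] x) = T.depth x - k := by
  apply le_antisymm
  · apply T.depth_le'
    rw [← Function.iterate_add_apply, Nat.sub_add_cancel h]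
    exact T.iterate_depth' x
  · have h1 : T.parent^[T.depth (T.parent^[k] x) + k] x = T.s := by
      rw [Function.iterate_add_apply]
      exact T.iterate_depth' _
    have := T.depth_le' h1
    omega

lemma mem_agents' {x : α} : x ∈ T.agents ↔ x ≠ T.s := by
  simp [agents]

lemma mem_Vminus' {A : Finset α} {i j : α} :
    j ∈ T.Vminus A i ↔ j ∈ A ∧ j ≠ i ∧ ¬ T.desc i j := by
  simp [Vminus]

lemma Vminus_subset_Vminus' {i c : α} (h : T.desc i c) (A : Finset α) :
    T.Vminus A i ⊆ T.Vminus A c := by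
  intro j hj
  rw [mem_Vminus'] at hj ⊢
  obtain ⟨hjA, hji, hdij⟩ := hj
  refine ⟨hjA, ?_, fun hcj => hdij (T.desc_trans' h hcj)⟩
  rintro rfl
  exact hdij h

lemma Vminus_removeSubtrees' {i : α} (E' : Finset α)
    (hE : ∀ c ∈ E', T.parent c = i) :
    T.Vminus (T.removeSubtrees E') i = T.Vminus T.agents i := by
  ext j
  simp only [Vminus, removeSubtrees, Finset.mem_filter]
  constructor
  · rintro ⟨⟨hj, -⟩, h2⟩
    exact ⟨hj, h2⟩
  · rintro ⟨hj, hji, hdij⟩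
    refine ⟨⟨hj, fun c hc => ?_⟩, hji, hdij⟩
    have hic : T.desc i c := T.desc_parent' (hE c hc)
    constructor
    · rintro rfl
      exact hdij hic
    · intro hcj
      exact hdij (T.desc_trans' hic hcj)

lemma mem_removeSubtrees' {i : α} (hi : i ∈ T.agents) (E' : Finset α)
    (hE : ∀ c ∈ E', T.parent c = i) : i ∈ T.removeSubtrees E' := by
  rw [removeSubtrees, Finset.mem_filter]
  refine ⟨hi, fun c hc => ?_⟩
  exact T.parent_facts' ((T.mem_agents').1 hi) (hE c hc)

lemma ancestor_path' {i w : α} (hi : i ≠ T.s) (h : T.desc i w) :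
    1 ≤ T.depth i ∧ T.depth i < T.depth w ∧ T.pathVx w (T.depth i) = i ∧
      T.parent (T.pathVx w (T.depth i + 1)) = i := by
  obtain ⟨k, hk, hki⟩ := h
  have hklt : k < T.depth w := by
    by_contra hge
    push_neg at hge
    have := T.iterate_eq_s' (T.iterate_depth' w) hge
    rw [hki] at this
    exact hi this
  have hdi : T.depth i = T.depth w - k := by
    rw [← hki]
    exact T.depth_iterate' (le_of_lt hklt)
  have h1 : 1 ≤ T.depth i := T.depth_pos' hi
  refine ⟨h1, by omega, ?_, ?_⟩
  · rw [pathVx, hdi]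
    have : T.depth w - (T.depth w - k) = k := by omega
    rw [this, hki]
  · rw [pathVx, hdi]
    have h2 : T.depth w - (T.depth w - k + 1) = k - 1 := by omega
    rw [h2, ← Function.iterate_succ_apply' T.parent (k-1) w]
    have h9 : k - 1 + 1 = k := by omega
    rw [Nat.succ_eq_add_one, h9, hki]

lemma desc_of_pathVx' {i w : α} {j : ℕ} (hj : j < T.depth w)
    (h : T.pathVx w j = i) : T.desc i w :=
  ⟨T.depth w - j, by omega, h⟩

lemma bstar_eq_max' {b : α → ℝ} {S : Finset α} (h : S.Nonempty) :
    bstar b S = (S.image b).max' (h.image b) := by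
  rw [bstar, ← Finset.coe_max' (h.image b), WithBot.unbotD_coe]

lemma bstar_empty' (b : α → ℝ) : bstar b (∅ : Finset α) = 0 := by
  simp [bstar]

lemma le_bstar' {b : α → ℝ} {S : Finset α} {j : α} (hj : j ∈ S) :
    b j ≤ bstar b S := by
  rw [bstar_eq_max' ⟨j, hj⟩]
  exact Finset.le_max' _ _ (Finset.mem_image_of_mem b hj)

lemma bstar_le' {b : α → ℝ} {S : Finset α} {m : ℝ} (hm : 0 ≤ m)
    (h : ∀ j ∈ S, b j ≤ m) : bstar b S ≤ m := by
  rcases S.eq_empty_or_nonempty with rfl | hS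
  · rw [bstar_empty']; exact hm
  · rw [bstar_eq_max' hS]
    apply Finset.max'_le
    intro y hy
    obtain ⟨j, hj, rfl⟩ := Finset.mem_image.mp hy
    exact h j hj

lemma bstar_nonneg' {b : α → ℝ} {S : Finset α} (h : ∀ j ∈ S, 0 ≤ b j) :
    0 ≤ bstar b S := by
  rcases S.eq_empty_or_nonempty with rfl | hS
  · rw [bstar_empty']
  · obtain ⟨j, hj⟩ := hS
    exact le_trans (h j hj) (le_bstar' hj)

lemma bstar_congr' {b b' : α → ℝ} {S : Finset α} (h : ∀ j ∈ S, b j = b' j) :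
    bstar b S = bstar b' S := by
  unfold bstar
  congr 1
  rw [Finset.image_congr h]

lemma bstar_mono' {b : α → ℝ} {S S' : Finset α} (hb : ∀ j ∈ S', 0 ≤ b j)
    (hS : S ⊆ S') : bstar b S ≤ bstar b S' :=
  bstar_le' (bstar_nonneg' hb) (fun j hj => le_bstar' (hS hj))

end DiffusionTree

end AuxLemmas

open DiffusionTree in
/-- The bid profile `b_i(δ) = max(v_i, max_{j∈D_i} v_j − δ)` with
full (truthful) referrals is an ε-approximate Nash equilibrium of TRDM: for every
`ε > 0` there exists `δ0 > 0` such that for every `δ ∈ (0, δ0)` and every agent `i`,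
no unilateral deviation — any bid `β ≥ 0` together with deleting any subset of `i`'s
out-edges (removing the corresponding subtrees from the auction), TRDM then being
run on the resulting tree with the other remaining agents bidding `b_j(δ)` — gives
agent `i` utility more than `ε` above its utility at the profile `(b_j(δ))_j` on the
full tree. The winner selector `W` picks a highest bidder closest to `s`, remaining
ties broken by the fixed linear order on `α`. -/
theorem trdm_epsilon_approximate_nash
    {α : Type*} [Fintype α] [LinearOrder α] (T : DiffusionTree α)
    (v : α → ℝ) (hpos : ∀ j ∈ T.agents, 0 ≤ v j)
    (hdist : ∀ j ∈ T.agents, ∀ j' ∈ T.agents, j ≠ j' → v j ≠ v j')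
    (hne : T.agents.Nonempty)
    -- the tie-breaking winner selector: a highest bidder, closest to `s`,
    -- remaining ties broken by the linear order on `α`
    (W : Finset α → (α → ℝ) → α)
    (hW : ∀ (A : Finset α) (b : α → ℝ), A.Nonempty →
      W A b ∈ A ∧
      (∀ j ∈ A, b j ≤ b (W A b)) ∧
      (∀ j ∈ A, b j = b (W A b) → T.depth (W A b) ≤ T.depth j) ∧
      (∀ j ∈ A, b j = b (W A b) → T.depth j = T.depth (W A b) → W A b ≤ j)) :
    ∀ ε : ℝ, 0 < ε → ∃ δ0 : ℝ, 0 < δ0 ∧ ∀ δ : ℝ, 0 < δ → δ < δ0 →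
      ∀ i ∈ T.agents, ∀ β : ℝ, 0 ≤ β →
        ∀ E' : Finset α, (∀ c ∈ E', T.parent c = i) →
          T.util (T.removeSubtrees E') (Function.update (T.eqBid v δ) i β)
              (W (T.removeSubtrees E') (Function.update (T.eqBid v δ) i β)) (v i) i
            ≤ T.util T.agents (T.eqBid v δ)
                (W T.agents (T.eqBid v δ)) (v i) i + ε := by

  intro ε hε
  refine ⟨ε, hε, ?_⟩
  intro δ hδ hδε i hi β hβ E' hE
  obtain ⟨istar, histar, hmax⟩ := T.agents.exists_max_image v hne
  set m := v istar with hmdef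
  have hm0 : 0 ≤ m := hpos istar histar
  have his : i ≠ T.s := (T.mem_agents').1 hi
  have hDle : ∀ j : α, bstar v (T.agents.filter (fun j' => T.desc j j')) ≤ m := by
    intro j
    exact bstar_le' hm0 (fun k hk => hmax k (Finset.mem_of_mem_filter k hk))
  have heqle : ∀ j ∈ T.agents, T.eqBid v δ j ≤ m := by
    intro j hj
    apply max_le (hmax j hj)
    have := hDle j
    linarith
  have heqlt : ∀ j ∈ T.agents, j ≠ istar → T.eqBid v δ j < m := by
    intro j hj hji
    apply max_lt (lt_of_le_of_ne (hmax j hj) (hdist j hj istar histar hji))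
    have := hDle j
    linarith
  have heqstar : T.eqBid v δ istar = m := by
    apply max_eq_left
    have := hDle istar
    linarith
  have heqnonneg : ∀ j ∈ T.agents, 0 ≤ T.eqBid v δ j :=
    fun j hj => le_trans (hpos j hj) (le_max_left _ _)
  obtain ⟨hwmem, hwmax, -, -⟩ := hW T.agents (T.eqBid v δ) hne
  have hwistar : W T.agents (T.eqBid v δ) = istar := by
    by_contra hne'
    have h1 := hwmax istar histar
    have h2 := heqlt _ hwmem hne'
    rw [heqstar] at h1
    linarith
  set P := bstar (T.eqBid v δ) (T.Vminus T.agents i) with hPdef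
  have hPle : P ≤ m := by
    rw [hPdef]
    exact bstar_le' hm0 (fun j hj => heqle j ((T.mem_Vminus').1 hj).1)
  set A' := T.removeSubtrees E' with hA'def
  set b' := Function.update (T.eqBid v δ) i β with hb'def
  have hiA' : i ∈ A' := T.mem_removeSubtrees' hi E' hE
  have hA'sub : A' ⊆ T.agents := by
    intro x hx
    rw [hA'def] at hx
    simp only [removeSubtrees, Finset.mem_filter] at hx
    exact hx.1
  obtain ⟨hw'mem, hw'max, -, -⟩ := hW A' b' ⟨i, hiA'⟩
  set w' := W A' b' with hw'def
  have hVeq : T.Vminus A' i = T.Vminus T.agents i := T.Vminus_removeSubtrees' E' hE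
  have hPb' : bstar b' (T.Vminus A' i) = P := by
    rw [hVeq, hPdef]
    apply bstar_congr'
    intro j hj
    have hji : j ≠ i := ((T.mem_Vminus').1 hj).2.1
    rw [hb'def]
    exact Function.update_of_ne hji β (T.eqBid v δ)
  have hdev : T.util A' b' w' (v i) i ≤ max 0 (m - P) := by
    simp only [util, payment]
    by_cases hiw' : i = w'
    · rw [if_pos hiw', if_pos hiw', ← hiw', hPb']
      have h1 : v i ≤ m := hmax i hi
      have h2 := le_max_right (0:ℝ) (m - P)
      linarith
    · rw [if_neg hiw', if_neg hiw']
      by_cases hpath : ∃ j : ℕ, 1 ≤ j ∧ j < T.depth w' ∧ T.pathVx w' j = i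
      · rw [if_pos hpath, hPb']
        have hcle : bstar b' (T.Vminus A' (T.pathVx w' (T.depth i + 1))) ≤ m := by
          apply bstar_le' hm0
          intro j hj
          have hjA' : j ∈ A' := ((T.mem_Vminus').1 hj).1
          by_cases hji : j = i
          · subst hji
            have h1 : b' j ≤ b' w' := hw'max j hjA'
            have h2 : b' w' = T.eqBid v δ w' := by
              rw [hb'def]
              exact Function.update_of_ne (Ne.symm hiw') β (T.eqBid v δ)
            have h3 : T.eqBid v δ w' ≤ m := heqle w' (hA'sub hw'mem)
            linarith
          · rw [hb'def, Function.update_of_ne hji β (T.eqBid v δ)]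
            exact heqle j (hA'sub hjA')
        have h2 := le_max_right (0:ℝ) (m - P)
        linarith
      · rw [if_neg hpath]
        have := le_max_left (0:ℝ) (m - P)
        linarith
  have hequ : max 0 (m - P) - δ ≤
      T.util T.agents (T.eqBid v δ) (W T.agents (T.eqBid v δ)) (v i) i := by
    rw [hwistar]
    simp only [util, payment]
    by_cases hii : i = istar
    · rw [if_pos hii, if_pos hii, ← hii, ← hPdef]
      have hvm : v i = m := by rw [hii, hmdef]
      have h1 : max 0 (m - P) = m - P := max_eq_right (by linarith)
      rw [h1]
      linarith
    · by_cases hdesc : T.desc i istar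
      · obtain ⟨h1, h2, h3, h4⟩ := T.ancestor_path' his hdesc
        rw [if_neg hii, if_neg hii, if_pos ⟨T.depth i, h1, h2, h3⟩, ← hPdef]
        set c := T.pathVx istar (T.depth i + 1) with hcdef
        obtain ⟨hic, hdci⟩ := T.parent_facts' his h4
        have hcmem : i ∈ T.Vminus T.agents c := (T.mem_Vminus').2 ⟨hi, hic, hdci⟩
        have hge1 : T.eqBid v δ i ≤ bstar (T.eqBid v δ) (T.Vminus T.agents c) :=
          le_bstar' hcmem
        have hge2 : m - δ ≤ T.eqBid v δ i := by
          have histar_mem : istar ∈ T.agents.filter (fun j' => T.desc i j') :=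
            Finset.mem_filter.2 ⟨histar, hdesc⟩
          have h5 : m ≤ bstar v (T.agents.filter (fun j' => T.desc i j')) :=
            le_bstar' histar_mem
          have h6 : bstar v (T.agents.filter (fun j' => T.desc i j')) - δ ≤
              T.eqBid v δ i := le_max_right _ _
          linarith
        have hge3 : P ≤ bstar (T.eqBid v δ) (T.Vminus T.agents c) := by
          rw [hPdef]
          exact bstar_mono' (fun j hj => heqnonneg j ((T.mem_Vminus').1 hj).1)
            (T.Vminus_subset_Vminus' (T.desc_parent' h4) T.agents)
        have hmax2 : max 0 (m - P) ≤ bstar (T.eqBid v δ) (T.Vminus T.agents c) - P + δ :=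
          max_le (by linarith) (by linarith)
        linarith
      · have hii' : istar ≠ i := fun h => hii h.symm
        rw [if_neg hii, if_neg hii]
        have hnopath : ¬ ∃ j : ℕ, 1 ≤ j ∧ j < T.depth istar ∧ T.pathVx istar j = i := by
          rintro ⟨j, hj1, hj2, hj3⟩
          exact hdesc (T.desc_of_pathVx' hj2 hj3)
        rw [if_neg hnopath]
        have histarV : istar ∈ T.Vminus T.agents i :=
          (T.mem_Vminus').2 ⟨histar, hii', hdesc⟩
        have hmP : m ≤ P := by
          have h7 := le_bstar' (b := T.eqBid v δ) histarV
          rw [heqstar, ← hPdef] at h7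
          exact h7
        have hmax0 : max 0 (m - P) = 0 := max_eq_left (by linarith)
        rw [hmax0]
        linarith
  linarith [hdev, hequ, hδε]
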